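/- Let λ be a non-linear irreducible character of G ≤ S_m. If there exists j with [λ, 1_{G_j}] ≠ 0 such that √2/2 < ‖f^λ_{ij}‖ < 1, then V^λ(G) has no orthogonal basis consisting of standard λ-symmetrized vectors f^λ_{rs}. -/

import Mathlib

open scoped Classical InnerProductSpace ComplexConjugate

noncomputable section

/-- The Cartesian product `×^m V` with the inner product `⟨z,w⟩ = Σ ⟨z_i, w_i⟩`. -/
abbrev CartPow (V : Type*) [NormedAddCommGroup V] [InnerProductSpace ℂ V] (m : ℕ) :=
  PiLp 2 (fun _ : Fin m => V)

/-- The Cartesian permutation operator `Q(τ)(u₁,…,u_m) = (u_{τ⁻¹(1)},…,u_{τ⁻¹(m)})`. -/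
def CartQ (V : Type*) [NormedAddCommGroup V] [InnerProductSpace ℂ V] (m : ℕ)
    (τ : Equiv.Perm (Fin m)) : CartPow V m →ₗ[ℂ] CartPow V m where
  toFun u := WithLp.toLp 2 (fun i => u (τ⁻¹ i))
  map_add' _ _ := by first | rfl | (ext; simp)
  map_smul' _ _ := by first | rfl | (ext; simp)

/-- The Cartesian symmetrizer `C_χ = (χ(1)/|G|) Σ_{τ∈G} χ(τ) Q(τ)`. -/
def cartSym (V : Type*) [NormedAddCommGroup V] [InnerProductSpace ℂ V] (m : ℕ)
    (G : Subgroup (Equiv.Perm (Fin m))) (χ : ↥G → ℂ) :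
    CartPow V m →ₗ[ℂ] CartPow V m :=
  (χ 1 / (Nat.card G : ℂ)) • ∑ τ : G, χ τ • CartQ V m (τ : Equiv.Perm (Fin m))

/-- `χ : H → ℂ` is the character of some irreducible (finite-dimensional, complex)
representation of `H`. -/
def IsIrredChar {H : Type} [Group H] (χ : H → ℂ) : Prop :=
  ∃ W : FDRep ℂ H, CategoryTheory.Simple W ∧ χ = W.character

/-- The standard vectors `f_{ij} = (δ_{1j} f_i, …, δ_{mj} f_i)` in `×^m V`. -/
def stdVec {V : Type*} [NormedAddCommGroup V] [InnerProductSpace ℂ V] {n : ℕ}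
    (f : Fin n → V) (m : ℕ) (i : Fin n) (j : Fin m) : CartPow V m :=
  WithLp.toLp 2 (fun l => if l = j then f i else 0)

/-- `[χ, 1_{G_j}] = (1/|G_j|) Σ_{g ∈ G_j} χ(g)`. -/
def charInnerTriv {m : ℕ} (G : Subgroup (Equiv.Perm (Fin m))) (χ : ↥G → ℂ)
    (j : Fin m) : ℂ :=
  (Nat.card (MulAction.stabilizer G j) : ℂ)⁻¹ * ∑ g : MulAction.stabilizer G j, χ (g : ↥G)

/-- `V^χ(G)` has an orthogonal basis consisting of standard χ-symmetrized vectors. -/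
def HasOBasis (V : Type*) [NormedAddCommGroup V] [InnerProductSpace ℂ V] {n m : ℕ}
    (f : Fin n → V) (G : Subgroup (Equiv.Perm (Fin m))) (χ : ↥G → ℂ) : Prop :=
  ∃ (k : ℕ) (b : Module.Basis (Fin k) ℂ (LinearMap.range (cartSym V m G χ))),
    (∀ p q : Fin k, p ≠ q → ⟪(b p : CartPow V m), (b q : CartPow V m)⟫_ℂ = 0) ∧
    ∀ p, ∃ (r : Fin n) (j : Fin m), (b p : CartPow V m) = cartSym V m G χ (stdVec f m r j)

/-- The Ramanujan sum `c_n(q)`. -/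
def ramanujanSum (n q : ℕ) : ℂ :=
  ∑ s ∈ (Finset.range n).filter (fun s => Nat.gcd s n = 1),
    Complex.exp (2 * Real.pi * Complex.I * q * s / n)

end

section CharAux

open CategoryTheory ComplexConjugate
open scoped ComplexOrder

open Matrix in
lemma conj_char_aux {H : Type} [Group H] [Fintype H] (W : FDRep ℂ H) (g : H) :
    conj (W.character g) = W.character g⁻¹ := by
  classical
  let b := Module.finBasis ℂ W
  let M : H → Matrix (Fin (Module.finrank ℂ W)) (Fin (Module.finrank ℂ W)) ℂ :=
    fun h => LinearMap.toMatrix b b (W.ρ h)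
  have hmul : ∀ x y : H, M (x * y) = M x * M y := by
    intro x y
    show LinearMap.toMatrix b b (W.ρ (x * y)) = _
    rw [MonoidHom.map_mul, LinearMap.toMatrix_mul]
  have hone : M 1 = 1 := by
    show LinearMap.toMatrix b b (W.ρ 1) = 1
    rw [MonoidHom.map_one, LinearMap.toMatrix_one]
  have hMinv : ∀ x : H, M x * M x⁻¹ = 1 := by
    intro x; rw [← hmul, mul_inv_cancel, hone]
  set Hm : Matrix (Fin (Module.finrank ℂ W)) (Fin (Module.finrank ℂ W)) ℂ :=
    ∑ x : H, (M x)ᴴ * M x with hHm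
  have hHpd : Hm.PosDef := by
    have h1 : Hm = (M 1)ᴴ * M 1 + ∑ x ∈ Finset.univ.erase 1, (M x)ᴴ * M x :=
      (Finset.add_sum_erase _ _ (Finset.mem_univ 1)).symm
    rw [h1, hone]
    simp only [Matrix.conjTranspose_one, Matrix.one_mul]
    exact Matrix.PosDef.add_posSemidef Matrix.PosDef.one
      (Finset.sum_induction _ _ (fun a c ha hc => ha.add hc) Matrix.PosSemidef.zero
        (fun x _ => Matrix.posSemidef_conjTranspose_mul_self (M x)))
  have hinvar : ∀ h : H, (M h)ᴴ * Hm * M h = Hm := by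
    intro h
    have e1 : (M h)ᴴ * Hm * M h = ∑ x : H, (M (x * h))ᴴ * M (x * h) := by
      rw [hHm, Finset.mul_sum, Finset.sum_mul]
      exact Finset.sum_congr rfl fun x _ => by
        rw [hmul, Matrix.conjTranspose_mul]; noncomm_ring
    rw [e1, hHm]
    exact Fintype.sum_equiv (Equiv.mulRight h) _ _ (fun x => rfl)
  have key : (M g)ᴴ * Hm = Hm * M g⁻¹ := by
    calc (M g)ᴴ * Hm = (M g)ᴴ * Hm * (M g * M g⁻¹) := by rw [hMinv, Matrix.mul_one]
    _ = ((M g)ᴴ * Hm * M g) * M g⁻¹ := by noncomm_ring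
    _ = Hm * M g⁻¹ := by rw [hinvar]
  haveI := hHpd.isUnit.invertible
  have htr : ((M g)ᴴ).trace = (M g⁻¹).trace := by
    have e2 : (M g)ᴴ = Hm * M g⁻¹ * Hm⁻¹ := by
      rw [← key, Matrix.mul_assoc, Matrix.mul_inv_of_invertible, Matrix.mul_one]
    rw [e2, Matrix.trace_mul_cycle, Matrix.inv_mul_of_invertible, Matrix.one_mul]
  have hchar : ∀ x : H, W.character x = (M x).trace := by
    intro x
    exact LinearMap.trace_eq_matrix_trace ℂ b (W.ρ x)
  rw [hchar, hchar, ← htr, Matrix.trace_conjTranspose]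
  rfl

lemma conv_char_aux {H : Type} [Group H] [Fintype H] (W : FDRep ℂ H) [Simple W]
    (hd : (Module.finrank ℂ W : ℂ) ≠ 0) (π : H) :
    ∑ σ : H, conj (W.character σ) * W.character (σ * π)
      = (Fintype.card H : ℂ) / (Module.finrank ℂ W : ℂ) * W.character π := by
  classical
  let A : W →ₗ[ℂ] W := ∑ σ : H, W.character σ⁻¹ • (W.ρ σ : W →ₗ[ℂ] W)
  have hcommA : ∀ h : H, A ∘ₗ (W.ρ h : W →ₗ[ℂ] W) = (W.ρ h : W →ₗ[ℂ] W) ∘ₗ A := by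
    intro h
    show A * (W.ρ h : W →ₗ[ℂ] W) = (W.ρ h : W →ₗ[ℂ] W) * A
    simp only [A, Finset.sum_mul, Finset.mul_sum, smul_mul_assoc, mul_smul_comm,
      ← map_mul]
    exact (Fintype.sum_equiv (MulAut.conj h).toEquiv
      (fun σ => W.character σ⁻¹ • ((W.ρ (h * σ)) : W →ₗ[ℂ] W))
      (fun σ => W.character σ⁻¹ • ((W.ρ (σ * h)) : W →ₗ[ℂ] W))
      (fun τ => by
        show W.character τ⁻¹ • ((W.ρ (h * τ)) : W →ₗ[ℂ] W)
          = W.character (h * τ * h⁻¹)⁻¹ • ((W.ρ (h * τ * h⁻¹ * h)) : W →ₗ[ℂ] W)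
        rw [show (h * τ * h⁻¹)⁻¹ = h * τ⁻¹ * h⁻¹ by group,
          show h * τ * h⁻¹ * h = h * τ by group]
        rw [show h * τ⁻¹ * h⁻¹ = h * τ⁻¹ * h⁻¹ from rfl, FDRep.char_conj])).symm
  let φ : W ⟶ W := ⟨FGModuleCat.ofHom A, fun h => by ext x; exact LinearMap.congr_fun (hcommA h) x⟩
  obtain ⟨c, hc⟩ := CategoryTheory.endomorphism_simple_eq_smul_id ℂ φ
  have hA : A = c • LinearMap.id := by
    have := congrArg (fun f : W ⟶ W => f.hom.hom.hom) hc; exact this.symm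
  haveI : Invertible ((Fintype.card H : ℂ)) :=
    invertibleOfNonzero (Nat.cast_ne_zero.mpr Fintype.card_ne_zero)
  letI : Fintype ↑(GrpCat.of H) := ‹Fintype H›
  have horth := FDRep.char_orthonormal (k := ℂ) (G := H) W W
  rw [if_pos ⟨Iso.refl W⟩] at horth
  have hsum : ∑ g : H, W.character g * W.character g⁻¹ = (Fintype.card H : ℂ) := by
    have h2 := congrArg (fun z => ((Nat.card H) : ℂ) * z) horth
    rw [← mul_assoc, mul_inv_cancel₀ (Nat.cast_ne_zero.mpr Nat.card_pos.ne' : (Nat.card H : ℂ) ≠ 0),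
      one_mul] at h2
    simp only [Nat.cast_one, mul_one, Nat.card_eq_fintype_card] at h2
    exact h2
  have htrA : LinearMap.trace ℂ W A = (Fintype.card H : ℂ) := by
    simp only [A, map_sum, _root_.map_smul, smul_eq_mul]
    rw [← hsum]
    exact Fintype.sum_equiv (Equiv.inv H) _ _ (fun σ => by
      simp [FDRep.character, mul_comm])
  have hcval : c * (Module.finrank ℂ W : ℂ) = (Fintype.card H : ℂ) := by
    rw [← htrA, hA, _root_.map_smul, LinearMap.trace_id, smul_eq_mul]
  have key : ∀ σ : H, conj (W.character σ) * W.character (σ * π)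
      = W.character σ⁻¹ * W.character (σ * π) := fun σ => by rw [conj_char_aux]
  simp only [key]
  have hAρ : A * (W.ρ π : W →ₗ[ℂ] W) = ∑ σ : H, W.character σ⁻¹ • ((W.ρ (σ * π)) : W →ₗ[ℂ] W) := by
    rw [Finset.sum_mul]
    exact Finset.sum_congr rfl fun σ _ => by rw [smul_mul_assoc, ← _root_.map_mul]
  have lhs : ∑ σ : H, W.character σ⁻¹ * W.character (σ * π)
      = LinearMap.trace ℂ W (A * (W.ρ π : W →ₗ[ℂ] W)) := by
    rw [hAρ, map_sum]
    exact Finset.sum_congr rfl fun σ _ => by rw [_root_.map_smul, smul_eq_mul]; rfl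
  rw [lhs, hA, smul_mul_assoc, ← Module.End.one_eq_id, one_mul, _root_.map_smul, smul_eq_mul,
    (eq_div_iff hd).mpr hcval]
  rfl

end CharAux

noncomputable section Aux

variable {V : Type*} [NormedAddCommGroup V] [InnerProductSpace ℂ V] {n m : ℕ}

lemma cartQ_stdVec (f : Fin n → V) (τ : Equiv.Perm (Fin m)) (r : Fin n) (k : Fin m) :
    CartQ V m τ (stdVec f m r k) = stdVec f m r (τ k) := by
  ext l
  show (if τ⁻¹ l = k then f r else 0) = (if l = τ k then f r else 0)
  congr 1
  simp only [eq_iff_iff]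
  constructor
  · intro h; rw [← h, Equiv.Perm.inv_def, Equiv.apply_symm_apply]
  · intro h; rw [h, Equiv.Perm.inv_def, Equiv.symm_apply_apply]

lemma inner_stdVec (f : OrthonormalBasis (Fin n) ℂ V) (r s : Fin n) (k l : Fin m) :
    ⟪stdVec ⇑f m r k, stdVec ⇑f m s l⟫_ℂ = if r = s ∧ k = l then 1 else 0 := by
  rw [PiLp.inner_apply]
  by_cases hkl : k = l
  · subst hkl
    have hterm : ∀ q : Fin m, ⟪stdVec ⇑f m r k q, stdVec ⇑f m s k q⟫_ℂ
        = if q = k then ⟪f r, f s⟫_ℂ else 0 := by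
      intro q
      show ⟪(if q = k then f r else 0), (if q = k then f s else 0)⟫_ℂ = _
      by_cases h1 : q = k <;> simp [h1]
    rw [Finset.sum_congr rfl fun q _ => hterm q,
      Finset.sum_ite_eq' Finset.univ k (fun _ => ⟪f r, f s⟫_ℂ)]
    simp [orthonormal_iff_ite.mp f.orthonormal]
  · have hterm : ∀ q : Fin m, ⟪stdVec ⇑f m r k q, stdVec ⇑f m s l q⟫_ℂ = 0 := by
      intro q
      show ⟪(if q = k then f r else 0), (if q = l then f s else 0)⟫_ℂ = 0
      rcases eq_or_ne q k with h1|h1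
      · rcases eq_or_ne q l with h2|h2
        · exact absurd (h1.symm.trans h2) hkl
        · simp [h1, h2, hkl]
      · simp [h1]
    simp [hterm, hkl]

lemma cartSym_stdVec (G : Subgroup (Equiv.Perm (Fin m))) (χ : ↥G → ℂ)
    (f : Fin n → V) (r : Fin n) (k : Fin m) :
    cartSym V m G χ (stdVec f m r k)
      = (χ 1 / (Nat.card G : ℂ)) •
        ∑ τ : G, χ τ • stdVec f m r ((τ : Equiv.Perm (Fin m)) k) := by
  simp only [cartSym, LinearMap.smul_apply, LinearMap.sum_apply, LinearMap.smul_apply]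
  congr 1
  exact Finset.sum_congr rfl fun τ _ => by rw [cartQ_stdVec]

def symB {m : ℕ} (G : Subgroup (Equiv.Perm (Fin m))) (χ : ↥G → ℂ) (k l : Fin m) : ℂ :=
  (χ 1 / (Nat.card G : ℂ)) * ∑ π : G, if (π : Equiv.Perm (Fin m)) l = k then χ π else 0

lemma inner_cartSym_stdVec (f : OrthonormalBasis (Fin n) ℂ V)
    (G : Subgroup (Equiv.Perm (Fin m))) (χ : ↥G → ℂ)
    (hr1 : (starRingEnd ℂ) (χ 1) = χ 1) (hχ1 : χ 1 ≠ 0) (hN : (Nat.card G : ℂ) ≠ 0)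
    (hconv : ∀ π : ↥G, ∑ σ : ↥G, (starRingEnd ℂ) (χ σ) * χ (σ * π)
      = (Nat.card G : ℂ) / χ 1 * χ π)
    (r s : Fin n) (k l : Fin m) :
    ⟪cartSym V m G χ (stdVec ⇑f m r k), cartSym V m G χ (stdVec ⇑f m s l)⟫_ℂ
      = if r = s then symB G χ k l else 0 := by
  rw [cartSym_stdVec, cartSym_stdVec, inner_smul_left, inner_smul_right, sum_inner]
  simp only [inner_sum, inner_smul_left, inner_smul_right, inner_stdVec f]
  by_cases hrs : r = s
  · subst hrs
    simp only [eq_self_iff_true, true_and, if_true]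
    have hinner : ∀ σ : ↥G,
        (∑ τ : ↥G, χ τ * ((starRingEnd ℂ) (χ σ) *
          if (σ : Equiv.Perm (Fin m)) k = (τ : Equiv.Perm (Fin m)) l then (1:ℂ) else 0))
        = ∑ π : ↥G, if (π : Equiv.Perm (Fin m)) l = k
            then (starRingEnd ℂ) (χ σ) * χ (σ * π) else 0 := by
      intro σ
      refine (Fintype.sum_equiv (Equiv.mulLeft σ)
        (fun π => if (π : Equiv.Perm (Fin m)) l = k
          then (starRingEnd ℂ) (χ σ) * χ (σ * π) else 0)
        (fun τ => χ τ * ((starRingEnd ℂ) (χ σ) *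
          if (σ : Equiv.Perm (Fin m)) k = (τ : Equiv.Perm (Fin m)) l then (1:ℂ) else 0))
        (fun π => ?_)).symm
      show (if (π : Equiv.Perm (Fin m)) l = k then (starRingEnd ℂ) (χ σ) * χ (σ * π) else 0)
        = χ (σ * π) * ((starRingEnd ℂ) (χ σ) *
          if (σ : Equiv.Perm (Fin m)) k = ((σ * π : ↥G) : Equiv.Perm (Fin m)) l then (1:ℂ) else 0)
      have hcoe : ((σ * π : ↥G) : Equiv.Perm (Fin m)) l
          = (σ : Equiv.Perm (Fin m)) ((π : Equiv.Perm (Fin m)) l) := rfl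
      by_cases hc : (π : Equiv.Perm (Fin m)) l = k
      · rw [if_pos hc, if_pos (by rw [hcoe, hc]), mul_one, mul_comm]
      · rw [if_neg hc, if_neg, mul_zero, mul_zero]
        rw [hcoe]
        exact fun hcon => hc ((Equiv.injective _) hcon).symm
    rw [Finset.sum_congr rfl (fun σ _ => hinner σ), Finset.sum_comm]
    have hpi : ∀ π : ↥G, (∑ σ : ↥G, if (π : Equiv.Perm (Fin m)) l = k
          then (starRingEnd ℂ) (χ σ) * χ (σ * π) else 0)
        = ((Nat.card G : ℂ) / χ 1) * (if (π : Equiv.Perm (Fin m)) l = k then χ π else 0) := by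
      intro π
      by_cases hc : (π : Equiv.Perm (Fin m)) l = k
      · simp only [if_pos hc, hconv π]
      · simp only [if_neg hc, Finset.sum_const_zero, mul_zero]
    rw [Finset.sum_congr rfl (fun π _ => hpi π), ← Finset.mul_sum, symB,
      map_div₀, hr1, map_natCast]
    set S := ∑ π : ↥G, if (π : Equiv.Perm (Fin m)) l = k then χ π else 0 with hS
    have h1 : (χ 1 / (Nat.card G : ℂ)) * ((Nat.card G : ℂ) / χ 1) = 1 := by
      rw [div_mul_div_comm, mul_comm, div_self (mul_ne_zero hN hχ1)]
    calc χ 1 / (Nat.card G:ℂ) * (χ 1 / (Nat.card G:ℂ) * ((Nat.card G:ℂ) / χ 1 * S))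
        = (χ 1 / (Nat.card G:ℂ) * ((Nat.card G:ℂ) / χ 1)) * (χ 1 / (Nat.card G:ℂ) * S) := by
          ring
      _ = χ 1 / (Nat.card G:ℂ) * S := by rw [h1, one_mul]
  · simp only [hrs, false_and, if_neg, if_false]
    simp [hrs]

lemma symB_conj (G : Subgroup (Equiv.Perm (Fin m))) (χ : ↥G → ℂ)
    (hr1 : (starRingEnd ℂ) (χ 1) = χ 1)
    (hcinv : ∀ σ : ↥G, (starRingEnd ℂ) (χ σ) = χ σ⁻¹) (k l : Fin m) :
    (starRingEnd ℂ) (symB G χ k l) = symB G χ l k := by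
  rw [symB, symB, map_mul, map_div₀, hr1, map_natCast, map_sum]
  congr 1
  refine Fintype.sum_equiv (Equiv.inv ↥G)
    (fun π => (starRingEnd ℂ) (if (π : Equiv.Perm (Fin m)) l = k then χ π else 0))
    (fun ρ => if (ρ : Equiv.Perm (Fin m)) k = l then χ ρ else 0) (fun π => ?_)
  have hcoe : ((π⁻¹ : ↥G) : Equiv.Perm (Fin m)) = ((π : Equiv.Perm (Fin m)))⁻¹ := rfl
  show (starRingEnd ℂ) (if (π : Equiv.Perm (Fin m)) l = k then χ π else 0)
      = if ((π⁻¹ : ↥G) : Equiv.Perm (Fin m)) k = l then χ π⁻¹ else 0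
  by_cases hc : (π : Equiv.Perm (Fin m)) l = k
  · rw [if_pos hc, if_pos, hcinv]
    rw [hcoe, ← hc, Equiv.Perm.inv_def, Equiv.symm_apply_apply]
  · rw [if_neg hc, if_neg, map_zero]
    rw [hcoe]
    intro hcon
    exact hc (by rw [← hcon, Equiv.Perm.inv_def, Equiv.apply_symm_apply])

lemma symB_idem (G : Subgroup (Equiv.Perm (Fin m))) (χ : ↥G → ℂ)
    (hχ1 : χ 1 ≠ 0) (hN : (Nat.card G : ℂ) ≠ 0)
    (hcinv : ∀ σ : ↥G, (starRingEnd ℂ) (χ σ) = χ σ⁻¹)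
    (hcomm : ∀ a b : ↥G, χ (a * b) = χ (b * a))
    (hconv : ∀ π : ↥G, ∑ σ : ↥G, (starRingEnd ℂ) (χ σ) * χ (σ * π)
      = (Nat.card G : ℂ) / χ 1 * χ π)
    (l : Fin m) :
    ∑ k : Fin m, symB G χ k l * symB G χ l k = symB G χ l l := by
  have e1 : ∀ k : Fin m, symB G χ k l * symB G χ l k
      = (χ 1 / (Nat.card G : ℂ)) * (χ 1 / (Nat.card G : ℂ)) *
        ∑ π : ↥G, ∑ ρ : ↥G, (if (π : Equiv.Perm (Fin m)) l = k then χ π else 0) *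
          (if (ρ : Equiv.Perm (Fin m)) k = l then χ ρ else 0) := by
    intro k
    rw [symB, symB, ← Finset.sum_mul_sum]
    ring
  rw [Finset.sum_congr rfl (fun k _ => e1 k), ← Finset.mul_sum, Finset.sum_comm]
  have e2 : ∀ π : ↥G, ∑ k : Fin m, ∑ ρ : ↥G,
        (if (π : Equiv.Perm (Fin m)) l = k then χ π else 0) *
          (if (ρ : Equiv.Perm (Fin m)) k = l then χ ρ else 0)
      = ∑ ρ : ↥G, χ π * (if (ρ : Equiv.Perm (Fin m)) ((π : Equiv.Perm (Fin m)) l) = l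
          then χ ρ else 0) := by
    intro π
    rw [Finset.sum_comm]
    refine Finset.sum_congr rfl fun ρ _ => ?_
    have : ∀ k : Fin m, (if (π : Equiv.Perm (Fin m)) l = k then χ π else 0) *
          (if (ρ : Equiv.Perm (Fin m)) k = l then χ ρ else 0)
        = if (π : Equiv.Perm (Fin m)) l = k then χ π *
            (if (ρ : Equiv.Perm (Fin m)) k = l then χ ρ else 0) else 0 := by
      intro k
      by_cases hc : (π : Equiv.Perm (Fin m)) l = k
      · rw [if_pos hc, if_pos hc]
      · rw [if_neg hc, if_neg hc, zero_mul]
    rw [Finset.sum_congr rfl (fun k _ => this k), Finset.sum_ite_eq]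
    simp
  rw [Finset.sum_congr rfl (fun π _ => e2 π)]
  have e3 : ∀ π : ↥G, (∑ ρ : ↥G, χ π * (if (ρ : Equiv.Perm (Fin m))
        ((π : Equiv.Perm (Fin m)) l) = l then χ ρ else 0))
      = ∑ τ : ↥G, (if (τ : Equiv.Perm (Fin m)) l = l then χ π * χ (τ * π⁻¹) else 0) := by
    intro π
    refine (Fintype.sum_equiv (Equiv.mulRight π⁻¹)
      (fun τ => if (τ : Equiv.Perm (Fin m)) l = l then χ π * χ (τ * π⁻¹) else 0)
      (fun ρ => χ π * (if (ρ : Equiv.Perm (Fin m)) ((π : Equiv.Perm (Fin m)) l) = l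
        then χ ρ else 0)) (fun τ => ?_)).symm
    show (if (τ : Equiv.Perm (Fin m)) l = l then χ π * χ (τ * π⁻¹) else 0)
      = χ π * (if ((τ * π⁻¹ : ↥G) : Equiv.Perm (Fin m)) ((π : Equiv.Perm (Fin m)) l) = l
          then χ (τ * π⁻¹) else 0)
    have hcoe : ((τ * π⁻¹ : ↥G) : Equiv.Perm (Fin m)) ((π : Equiv.Perm (Fin m)) l)
        = (τ : Equiv.Perm (Fin m)) l := by
      show ((τ : Equiv.Perm (Fin m)) * ((π : Equiv.Perm (Fin m)))⁻¹)
          ((π : Equiv.Perm (Fin m)) l) = _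
      rw [Equiv.Perm.mul_apply, Equiv.Perm.inv_def, Equiv.symm_apply_apply]
    rw [hcoe]
    by_cases hc : (τ : Equiv.Perm (Fin m)) l = l
    · rw [if_pos hc, if_pos hc]
    · rw [if_neg hc, if_neg hc, mul_zero]
  rw [Finset.sum_congr rfl (fun π _ => e3 π), Finset.sum_comm]
  have e4 : ∀ τ : ↥G, (∑ π : ↥G, if (τ : Equiv.Perm (Fin m)) l = l
        then χ π * χ (τ * π⁻¹) else 0)
      = ((Nat.card G : ℂ) / χ 1) * (if (τ : Equiv.Perm (Fin m)) l = l then χ τ else 0) := by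
    intro τ
    by_cases hc : (τ : Equiv.Perm (Fin m)) l = l
    · simp only [if_pos hc]
      rw [← hconv τ]
      refine Fintype.sum_equiv (Equiv.inv ↥G) _ _ fun π => ?_
      show χ π * χ (τ * π⁻¹) = (starRingEnd ℂ) (χ π⁻¹) * χ (π⁻¹ * τ)
      rw [hcinv, inv_inv, hcomm π⁻¹ τ]
    · simp only [if_neg hc, Finset.sum_const_zero, mul_zero]
  rw [Finset.sum_congr rfl (fun τ _ => e4 τ), ← Finset.mul_sum, symB]
  set S := ∑ τ : ↥G, if (τ : Equiv.Perm (Fin m)) l = l then χ τ else 0 with hS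
  have h1 : (χ 1 / (Nat.card G : ℂ)) * ((Nat.card G : ℂ) / χ 1) = 1 := by
    rw [div_mul_div_comm, mul_comm, div_self (mul_ne_zero hN hχ1)]
  calc χ 1 / (Nat.card G:ℂ) * (χ 1 / (Nat.card G:ℂ)) * ((Nat.card G:ℂ) / χ 1 * S)
      = (χ 1 / (Nat.card G:ℂ) * ((Nat.card G:ℂ) / χ 1)) * (χ 1 / (Nat.card G:ℂ) * S) := by
        ring
    _ = χ 1 / (Nat.card G:ℂ) * S := by rw [h1, one_mul]

lemma symB_orbit (G : Subgroup (Equiv.Perm (Fin m))) (χ : ↥G → ℂ)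
    (hcomm : ∀ a b : ↥G, χ (a * b) = χ (b * a)) (σ : ↥G) (k l : Fin m) :
    symB G χ ((σ : Equiv.Perm (Fin m)) k) ((σ : Equiv.Perm (Fin m)) l) = symB G χ k l := by
  rw [symB, symB]
  congr 1
  refine (Fintype.sum_equiv (MulAut.conj σ).toEquiv
    (fun ρ => if (ρ : Equiv.Perm (Fin m)) l = k then χ ρ else 0)
    (fun π => if (π : Equiv.Perm (Fin m)) ((σ : Equiv.Perm (Fin m)) l)
      = (σ : Equiv.Perm (Fin m)) k then χ π else 0) (fun ρ => ?_)).symm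
  show (if (ρ : Equiv.Perm (Fin m)) l = k then χ ρ else 0)
    = if ((σ * ρ * σ⁻¹ : ↥G) : Equiv.Perm (Fin m)) ((σ : Equiv.Perm (Fin m)) l)
        = (σ : Equiv.Perm (Fin m)) k then χ (σ * ρ * σ⁻¹) else 0
  have hcoe : ((σ * ρ * σ⁻¹ : ↥G) : Equiv.Perm (Fin m)) ((σ : Equiv.Perm (Fin m)) l)
      = (σ : Equiv.Perm (Fin m)) ((ρ : Equiv.Perm (Fin m)) l) := by
    show ((σ : Equiv.Perm (Fin m)) * (ρ : Equiv.Perm (Fin m)) *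
        ((σ : Equiv.Perm (Fin m)))⁻¹) ((σ : Equiv.Perm (Fin m)) l) = _
    rw [Equiv.Perm.mul_apply, Equiv.Perm.mul_apply, Equiv.Perm.inv_def, Equiv.symm_apply_apply]
  have hchi : χ (σ * ρ * σ⁻¹) = χ ρ := by
    rw [hcomm, ← mul_assoc, inv_mul_cancel, one_mul]
  rw [hcoe, hchi]
  by_cases hc : (ρ : Equiv.Perm (Fin m)) l = k
  · rw [if_pos hc, if_pos (by rw [hc])]
  · rw [if_neg hc, if_neg (fun hcon => hc ((Equiv.injective _) hcon))]

lemma symB_off_orbit (G : Subgroup (Equiv.Perm (Fin m))) (χ : ↥G → ℂ)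
    (k l : Fin m) (h : ∀ σ : ↥G, (σ : Equiv.Perm (Fin m)) l ≠ k) :
    symB G χ k l = 0 := by
  rw [symB]
  have : ∀ π : ↥G, (if (π : Equiv.Perm (Fin m)) l = k then χ π else 0) = 0 := fun π =>
    if_neg (h π)
  rw [Finset.sum_congr rfl (fun π _ => this π), Finset.sum_const_zero, mul_zero]

end Aux

/-- if `χ` is a non-linear irreducible character of `G` and there is `j`
with `[χ, 1_{G_j}] ≠ 0` and `√2/2 < ‖f^χ_{ij}‖ < 1`, then `V^χ(G)` has no `O`-basis. -/
theorem no_OBasis_of_norm_between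
    (V : Type*) [NormedAddCommGroup V] [InnerProductSpace ℂ V] [FiniteDimensional ℂ V]
    {n m : ℕ} (f : OrthonormalBasis (Fin n) ℂ V)
    (G : Subgroup (Equiv.Perm (Fin m))) (χ : ↥G → ℂ)
    (hχ : ∃ W : FDRep ℂ ↥G, CategoryTheory.Simple W ∧ χ = W.character ∧
      1 < Module.finrank ℂ W)
    (i : Fin n) (j : Fin m) (hj : charInnerTriv G χ j ≠ 0)
    (h1 : Real.sqrt 2 / 2 < ‖cartSym V m G χ (stdVec ⇑f m i j)‖)
    (h2 : ‖cartSym V m G χ (stdVec ⇑f m i j)‖ < 1) :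
    ¬ HasOBasis V ⇑f G χ := by
  classical
  intro hOB
  obtain ⟨W, hsimp, hcharW, hdim⟩ := hχ
  haveI := hsimp
  subst hcharW
  set χ : ↥G → ℂ := W.character with hχdef
  have hd0 : (Module.finrank ℂ W : ℂ) ≠ 0 := Nat.cast_ne_zero.mpr (by omega)
  have hcinv : ∀ σ : ↥G, (starRingEnd ℂ) (χ σ) = χ σ⁻¹ := fun σ => conj_char_aux W σ
  have hχ1 : χ 1 ≠ 0 := by rw [hχdef, FDRep.char_one]; exact hd0
  have hr1 : (starRingEnd ℂ) (χ 1) = χ 1 := by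
    rw [hχdef, FDRep.char_one]; exact Complex.conj_natCast _
  have hcomm : ∀ a c : ↥G, χ (a * c) = χ (c * a) := fun a c => FDRep.char_mul_comm W c a
  have hNG : (Nat.card ↥G : ℂ) ≠ 0 := Nat.cast_ne_zero.mpr Nat.card_pos.ne'
  have hconv : ∀ π : ↥G, ∑ σ : ↥G, (starRingEnd ℂ) (χ σ) * χ (σ * π)
      = (Nat.card ↥G : ℂ) / χ 1 * χ π := by
    intro π
    rw [hχdef, FDRep.char_one, Nat.card_eq_fintype_card]
    exact conv_char_aux W hd0 π
  have hB1 : ∀ (r s : Fin n) (k l : Fin m),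
      ⟪cartSym V m G χ (stdVec ⇑f m r k), cartSym V m G χ (stdVec ⇑f m s l)⟫_ℂ
        = if r = s then symB G χ k l else 0 :=
    fun r s k l => inner_cartSym_stdVec f G χ hr1 hχ1 hNG hconv r s k l
  set Tl : Fin m → ℝ := fun l => ‖cartSym V m G χ (stdVec ⇑f m i l)‖ ^ 2 with hTldef
  have hdiag : ∀ l, symB G χ l l = ((Tl l : ℝ) : ℂ) := by
    intro l
    have h5 := hB1 i i l l
    rw [if_pos rfl] at h5
    rw [← h5, inner_self_eq_norm_sq_to_K]
    norm_cast
  set t : ℝ := Tl j with htdef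
  have h9 : t = ‖cartSym V m G χ (stdVec ⇑f m i j)‖ ^ 2 := rfl
  have hn0 : 0 ≤ ‖cartSym V m G χ (stdVec ⇑f m i j)‖ := norm_nonneg _
  have hs2 : Real.sqrt 2 ^ 2 = 2 := Real.sq_sqrt (by norm_num)
  have ht2 : 1 / 2 < t := by nlinarith [h1, hn0, hs2, Real.sqrt_nonneg 2]
  have ht3 : t < 1 := by nlinarith [h2, hn0]
  have hTorb : ∀ σ : ↥G, ∀ l : Fin m, Tl ((σ : Equiv.Perm (Fin m)) l) = Tl l := by
    intro σ l
    have h5 := symB_orbit G χ hcomm σ l l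
    rw [hdiag, hdiag] at h5
    exact_mod_cast h5
  have hP2 : ∀ l, ∑ k : Fin m, Complex.normSq (symB G χ k l) = Tl l := by
    intro l
    have h3 := symB_idem G χ hχ1 hNG hcinv hcomm hconv l
    have h4 : ∀ k, symB G χ k l * symB G χ l k = (Complex.normSq (symB G χ k l) : ℂ) := by
      intro k
      rw [← symB_conj G χ hr1 hcinv k l, Complex.mul_conj]
    rw [Finset.sum_congr rfl (fun k _ => h4 k), hdiag] at h3
    exact_mod_cast h3
  obtain ⟨κ, b, horth, hform⟩ := hOB
  choose rr ss hbs using hform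
  have hbne : ∀ p, (b p : CartPow V m) ≠ 0 := by
    intro p h0
    exact b.ne_zero p (Subtype.coe_injective h0)
  have hE : ∀ σ0 : ↥G, t ^ 2 = ∑ p : Fin κ,
      Complex.normSq (if rr p = i then symB G χ (ss p) ((σ0 : Equiv.Perm (Fin m)) j) else 0) := by
    intro σ0
    set l : Fin m := (σ0 : Equiv.Perm (Fin m)) j with hl
    set v : CartPow V m := cartSym V m G χ (stdVec ⇑f m i l) with hv
    have hvmem : v ∈ LinearMap.range (cartSym V m G χ) := ⟨_, rfl⟩
    set u : LinearMap.range (cartSym V m G χ) := ⟨v, hvmem⟩ with hu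
    set c := b.repr u with hcdef
    have hvsum : v = ∑ p, c p • (b p : CartPow V m) := by
      have h6 := congrArg (Subtype.val) (b.sum_repr u)
      simp only [Submodule.coe_sum, SetLike.val_smul] at h6
      exact h6.symm
    have hbv : ∀ p, ⟪(b p : CartPow V m), v⟫_ℂ
        = c p * ⟪(b p : CartPow V m), (b p : CartPow V m)⟫_ℂ := by
      intro p
      conv_lhs => rw [hvsum]
      rw [inner_sum, Finset.sum_eq_single p]
      · rw [inner_smul_right]
      · intro q _ hq
        rw [inner_smul_right, horth p q (Ne.symm hq), mul_zero]
      · intro hp; exact absurd (Finset.mem_univ p) hp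
    have hvv : ⟪v, v⟫_ℂ = ∑ p, (starRingEnd ℂ) (c p) * ⟪(b p : CartPow V m), v⟫_ℂ := by
      nth_rewrite 1 [hvsum]
      rw [sum_inner]
      exact Finset.sum_congr rfl fun p _ => by rw [inner_smul_left]
    have hTll : Tl l = t := hTorb σ0 j
    have hinnerval : ∀ p, ⟪(b p : CartPow V m), v⟫_ℂ
        = if rr p = i then symB G χ (ss p) l else 0 := by
      intro p
      rw [hbs p, hv]
      exact hB1 (rr p) i (ss p) l
    have hterm : ∀ p, (starRingEnd ℂ) (c p) * ⟪(b p : CartPow V m), v⟫_ℂ * (t:ℂ)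
        = (Complex.normSq (if rr p = i then symB G χ (ss p) l else 0) : ℂ) := by
      intro p
      by_cases hcp : c p = 0
      · have hx0 : ⟪(b p : CartPow V m), v⟫_ℂ = 0 := by rw [hbv p, hcp, zero_mul]
        rw [← hinnerval p, hx0, mul_zero, zero_mul, Complex.normSq_zero, Complex.ofReal_zero]
      · have hnp : ⟪(b p : CartPow V m), (b p : CartPow V m)⟫_ℂ ≠ 0 :=
          fun h0 => hbne p (inner_self_eq_zero.mp h0)
        have hx : ⟪(b p : CartPow V m), v⟫_ℂ ≠ 0 := by
          rw [hbv p]; exact mul_ne_zero hcp hnp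
        have hxv := hinnerval p
        have hri : rr p = i := by
          by_contra hri
          rw [hxv, if_neg hri] at hx
          exact hx rfl
        rw [if_pos hri] at hxv
        have hsymne : symB G χ (ss p) l ≠ 0 := by rw [← hxv]; exact hx
        obtain ⟨σ1, hσ1⟩ : ∃ σ1 : ↥G, (σ1 : Equiv.Perm (Fin m)) l = ss p := by
          by_contra hno
          push_neg at hno
          exact hsymne (symB_off_orbit G χ (ss p) l hno)
        have hnpt : ⟪(b p : CartPow V m), (b p : CartPow V m)⟫_ℂ = ((t:ℝ) : ℂ) := by
          rw [hbs p, hB1 (rr p) (rr p) (ss p) (ss p), if_pos rfl, hdiag, ← hσ1,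
            hTorb σ1 l, hTll]
        have hbveq : ⟪(b p : CartPow V m), v⟫_ℂ = c p * ((t:ℝ) : ℂ) := by
          rw [hbv p, hnpt]
        have hrear : (starRingEnd ℂ) (c p) * (c p * ((t:ℝ):ℂ)) * ((t:ℝ):ℂ)
            = c p * (starRingEnd ℂ) (c p) * (((t:ℝ):ℂ) * ((t:ℝ):ℂ)) := by ring
        rw [if_pos hri, ← hxv, hbveq, hrear, Complex.mul_conj, Complex.normSq_mul,
          Complex.normSq_ofReal]
        push_cast
        ring
    have hsum2 : ((t : ℝ) : ℂ) * ((t:ℝ) : ℂ)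
        = ∑ p, (Complex.normSq (if rr p = i then symB G χ (ss p) l else 0) : ℂ) := by
      rw [← Finset.sum_congr rfl (fun p _ => hterm p), ← Finset.sum_mul, ← hvv]
      have h7 : ⟪v, v⟫_ℂ = ((t:ℝ) : ℂ) := by
        rw [inner_self_eq_norm_sq_to_K]
        have h8 : ‖v‖ ^ 2 = t := hTll
        rw [← h8]
        norm_cast
      rw [h7]
    have hfin : ((t ^ 2 : ℝ) : ℂ) = ((∑ p, Complex.normSq
        (if rr p = i then symB G χ (ss p) l else 0) : ℝ) : ℂ) := by
      push_cast
      rw [sq, hsum2]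
    exact_mod_cast hfin
  set P : Finset (Fin κ) := Finset.univ.filter (fun p => rr p = i) with hPdef
  set K : Finset (Fin m) := P.image ss with hKdef
  have hinj : ∀ p ∈ P, ∀ q ∈ P, ss p = ss q → p = q := by
    intro p hp q hq hss
    have hrp : rr p = i := (Finset.mem_filter.mp hp).2
    have hrq : rr q = i := (Finset.mem_filter.mp hq).2
    have hco : (b p : CartPow V m) = (b q : CartPow V m) := by
      rw [hbs p, hbs q, hrp, hrq, hss]
    exact b.injective (Subtype.coe_injective hco)
  have hEK : ∀ σ0 : ↥G,
      t ^ 2 = ∑ k ∈ K, Complex.normSq (symB G χ k ((σ0 : Equiv.Perm (Fin m)) j)) := by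
    intro σ0
    have himg : ∑ k ∈ K, Complex.normSq (symB G χ k ((σ0 : Equiv.Perm (Fin m)) j))
        = ∑ p ∈ P, Complex.normSq (symB G χ (ss p) ((σ0 : Equiv.Perm (Fin m)) j)) :=
      Finset.sum_image hinj
    rw [hE σ0, himg, Finset.sum_filter]
    refine Finset.sum_congr rfl fun p _ => ?_
    by_cases hri : rr p = i
    · rw [if_pos hri, if_pos hri]
    · rw [if_neg hri, if_neg hri, Complex.normSq_zero]
  by_cases hcov : ∀ σ : ↥G, (σ : Equiv.Perm (Fin m)) j ∈ K
  · have hco1 : ((1 : ↥G) : Equiv.Perm (Fin m)) j = j := rfl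
    have hjK : j ∈ K := by rw [← hco1]; exact hcov 1
    have hE1 := hEK 1
    rw [hco1] at hE1
    have hjj : Complex.normSq (symB G χ j j) = t ^ 2 := by
      rw [hdiag j, ← htdef, Complex.normSq_ofReal, sq]
    have hsplit : Complex.normSq (symB G χ j j)
        + ∑ k ∈ K.erase j, Complex.normSq (symB G χ k j)
        = ∑ k ∈ K, Complex.normSq (symB G χ k j) :=
      Finset.add_sum_erase K (fun k => Complex.normSq (symB G χ k j)) hjK
    have hz : ∑ k ∈ K.erase j, Complex.normSq (symB G χ k j) = 0 := by
      have h11 := hE1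
      rw [← hsplit, hjj] at h11
      linarith
    have hzero : ∀ k, k ≠ j → symB G χ k j = 0 := by
      intro k hkj
      by_cases hkK : k ∈ K
      · have hk' : k ∈ K.erase j := Finset.mem_erase.mpr ⟨hkj, hkK⟩
        have h10 := (Finset.sum_eq_zero_iff_of_nonneg
          (fun x _ => Complex.normSq_nonneg _)).mp hz k hk'
        exact Complex.normSq_eq_zero.mp h10
      · exact symB_off_orbit G χ k j (fun σ hσ => hkK (hσ ▸ hcov σ))
    have h12 : Complex.normSq (symB G χ j j)
        + ∑ k ∈ Finset.univ.erase j, Complex.normSq (symB G χ k j)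
        = ∑ k : Fin m, Complex.normSq (symB G χ k j) :=
      Finset.add_sum_erase Finset.univ (fun k => Complex.normSq (symB G χ k j)) (Finset.mem_univ j)
    have hPj : Complex.normSq (symB G χ j j)
        + ∑ k ∈ Finset.univ.erase j, Complex.normSq (symB G χ k j) = Tl j := by
      rw [h12]; exact hP2 j
    have hz2 : ∑ k ∈ Finset.univ.erase j, Complex.normSq (symB G χ k j) = 0 :=
      Finset.sum_eq_zero fun k hk => by
        rw [hzero k (Finset.mem_erase.mp hk).1, Complex.normSq_zero]
    rw [hz2, add_zero, hjj, ← htdef] at hPj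
    nlinarith [ht2, ht3, hPj]
  · push_neg at hcov
    obtain ⟨σ0, hσ0⟩ := hcov
    have hEσ := hEK σ0
    set l : Fin m := (σ0 : Equiv.Perm (Fin m)) j with hl
    have hKsub : K ⊆ Finset.univ.erase l := fun k hk =>
      Finset.mem_erase.mpr ⟨fun h => hσ0 (h ▸ hk), Finset.mem_univ k⟩
    have hle : ∑ k ∈ K, Complex.normSq (symB G χ k l)
        ≤ ∑ k ∈ Finset.univ.erase l, Complex.normSq (symB G χ k l) :=
      Finset.sum_le_sum_of_subset_of_nonneg hKsub (fun k _ _ => Complex.normSq_nonneg _)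
    have hTll : Tl l = t := hTorb σ0 j
    have hll : Complex.normSq (symB G χ l l) = t ^ 2 := by
      rw [hdiag l, hTll, Complex.normSq_ofReal, sq]
    have h13 : Complex.normSq (symB G χ l l)
        + ∑ k ∈ Finset.univ.erase l, Complex.normSq (symB G χ k l)
        = ∑ k : Fin m, Complex.normSq (symB G χ k l) :=
      Finset.add_sum_erase Finset.univ (fun k => Complex.normSq (symB G χ k l)) (Finset.mem_univ l)
    have hPl : t ^ 2 + ∑ k ∈ Finset.univ.erase l, Complex.normSq (symB G χ k l) = t := by
      rw [← hll, h13, hP2 l, hTll]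
    nlinarith [hEσ, hle, ht2, hPl]
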